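/- A functor F in Fct(C, A) belongs to Pol_0 (i.e., δ_x(F) = 0 for every object x of C) if and only if F is a quotient of a constant functor, i.e., there exist an object a of A and an epimorphism in Fct(C, A) from the constant functor with value a onto F. Moreover, in this case the canonical natural transformation from the constant functor with value F(𝟙) to F (induced by initiality of 𝟙) is an epimorphism. -/

import Mathlib

open CategoryTheory CategoryTheory.Limits CategoryTheory.MonoidalCategory

variable {C : Type*} [Category C] [MonoidalCategory C]
variable {A : Type*} [Category A] [Abelian A]

/-- The translation endofunctor `τ_x` of `Fct(C, A)`: precomposition with `x ⊗ -`. -/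
noncomputable def tauF (A : Type*) [Category A] (x : C) : (C ⥤ A) ⥤ (C ⥤ A) :=
  (Functor.whiskeringLeft C C A).obj (tensorLeft x)

/-- The component `i_x(F) : F ⟶ τ_x F`, whose component at `c` is
`F` applied to `c ≅ 𝟙 ⊗ c ⟶ x ⊗ c`. -/
def iApp (hI : IsInitial (𝟙_ C)) (x : C) (F : C ⥤ A) : F ⟶ tensorLeft x ⋙ F where
  app c := F.map ((λ_ c).inv ≫ hI.to x ▷ c)
  naturality c c' f := by
    dsimp
    rw [← F.map_comp, ← F.map_comp]
    congr 1
    rw [leftUnitor_inv_naturality_assoc, whisker_exchange, Category.assoc]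

/-- The natural transformation `i_x : Id ⟶ τ_x` of endofunctors of `Fct(C, A)`. -/
noncomputable def iNT (hI : IsInitial (𝟙_ C)) (x : C) :
    𝟭 (C ⥤ A) ⟶ tauF A x where
  app F := iApp hI x F
  naturality F G η := by
    ext c
    exact (η.naturality _).symm

/-- The evanescence endofunctor `κ_x = ker(i_x)` of `Fct(C, A)`. -/
noncomputable def kappaF (hI : IsInitial (𝟙_ C)) (x : C) : (C ⥤ A) ⥤ (C ⥤ A) :=
  kernel (iNT (A := A) hI x)

/-- The difference endofunctor `δ_x = coker(i_x)` of `Fct(C, A)`. -/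
noncomputable def deltaF (hI : IsInitial (𝟙_ C)) (x : C) : (C ⥤ A) ⥤ (C ⥤ A) :=
  cokernel (iNT (A := A) hI x)

/-- `PolAux hI (n+1) F` says that `F` is strong polynomial of degree `≤ n`;
`PolAux hI 0 F` says that `F` is the zero functor (degree `≤ -1`). -/
def PolAux (hI : IsInitial (𝟙_ C)) : ℕ → (C ⥤ A) → Prop
  | 0 => fun F => IsZero F
  | n + 1 => fun F => ∀ x : C, PolAux hI n ((deltaF hI x).obj F)

/-- `Pol hI n F` : `F` is strong polynomial of degree `≤ n` (with `Pol_m = {0}` for `m < 0`). -/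
def Pol (hI : IsInitial (𝟙_ C)) (n : ℤ) (F : C ⥤ A) : Prop :=
  PolAux hI (n + 1).toNat F

/-- The canonical natural transformation from the constant functor with value `F(𝟙)`
to `F`, induced by initiality of the unit. -/
def constToSelf (hI : IsInitial (𝟙_ C)) (F : C ⥤ A) :
    (Functor.const C).obj (F.obj (𝟙_ C)) ⟶ F where
  app c := F.map (hI.to c)
  naturality c c' f := by
    dsimp
    rw [Category.id_comp, ← F.map_comp, hI.hom_ext (hI.to c ≫ f) (hI.to c')]


lemma pol_zero_iff_epi_iApp (hI : IsInitial (𝟙_ C)) (F : C ⥤ A) :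
    Pol hI 0 F ↔ ∀ x : C, Epi (iApp hI x F) := by
  show (∀ x : C, IsZero ((deltaF hI x).obj F)) ↔ _
  refine forall_congr' fun x => ?_
  let E := (evaluation (C ⥤ A) (C ⥤ A)).obj F
  have e : (deltaF hI x).obj F ≅ cokernel (E.map (iNT (A := A) hI x)) :=
    PreservesCokernel.iso E (iNT (A := A) hI x)
  have hmap : E.map (iNT (A := A) hI x) = iApp hI x F := rfl
  constructor
  · intro h
    rw [← hmap]
    exact Preadditive.epi_of_isZero_cokernel _ (h.of_iso e.symm)
  · intro h
    rw [← hmap] at h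
    have : Epi (E.map (iNT (A := A) hI x)) := h
    exact (isZero_zero _).of_iso (e ≪≫ cokernel.ofEpi _)

lemma epi_constToSelf_of_pol_zero (hI : IsInitial (𝟙_ C)) (F : C ⥤ A)
    (h : Pol hI 0 F) : Epi (constToSelf hI F) := by
  rw [pol_zero_iff_epi_iApp] at h
  rw [NatTrans.epi_iff_epi_app]
  intro c
  have key : (constToSelf hI F).app c =
      (iApp hI c F).app (𝟙_ C) ≫ F.map (ρ_ c).hom := by
    show F.map (hI.to c) = _
    rw [show hI.to c = ((λ_ (𝟙_ C)).inv ≫ hI.to c ▷ (𝟙_ C)) ≫ (ρ_ c).hom from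
      hI.hom_ext _ _, F.map_comp]
    rfl
  rw [key]
  have := h c
  have : Epi ((iApp hI c F).app (𝟙_ C)) := (NatTrans.epi_iff_epi_app _).1 (h c) _
  exact epi_comp _ _

/-- `F ∈ Pol_0` iff `F` is a quotient of a constant functor; in that case the
canonical map from the constant functor with value `F(𝟙)` is an epimorphism. -/
theorem pol_zero_iff_quotient_of_constant (hI : IsInitial (𝟙_ C)) (F : C ⥤ A) :
    (Pol hI 0 F ↔ ∃ (a : A) (p : (Functor.const C).obj a ⟶ F), Epi p) ∧
    (Pol hI 0 F → Epi (constToSelf hI F)) := by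
  refine ⟨⟨fun h => ⟨F.obj (𝟙_ C), constToSelf hI F, epi_constToSelf_of_pol_zero hI F h⟩, ?_⟩,
    epi_constToSelf_of_pol_zero hI F⟩
  rintro ⟨a, p, hp⟩
  rw [pol_zero_iff_epi_iApp]
  intro x
  rw [NatTrans.epi_iff_epi_app]
  intro c
  have key : p.app c ≫ (iApp hI x F).app c = p.app (x ⊗ c) := by
    simpa [iApp, F.map_comp] using (p.naturality ((λ_ c).inv ≫ hI.to x ▷ c)).symm
  have : Epi (p.app (x ⊗ c)) := (NatTrans.epi_iff_epi_app _).1 hp _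
  rw [← key] at this
  exact epi_of_epi (p.app c) _
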